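/- Let N be the set of 2×2 complex matrices M with M² = 0, and let f : N → N be any map satisfying f(A M A⁻¹) = A f(M) A⁻¹ for all A ∈ SL(2,ℂ) and all M ∈ N. Then there exists a complex number c such that f(M) = c M for all M ∈ N. -/
import Mathlib

theorem stmt_12
    (N : Set (Matrix (Fin 2) (Fin 2) ℂ))
    (hN : N = {M | M ^ 2 = 0})
    (f : Matrix (Fin 2) (Fin 2) ℂ → Matrix (Fin 2) (Fin 2) ℂ)
    (hmaps : ∀ M ∈ N, f M ∈ N)
    (hequiv : ∀ (A : Matrix.SpecialLinearGroup (Fin 2) ℂ), ∀ M ∈ N,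
      f ((A : Matrix (Fin 2) (Fin 2) ℂ) * M *
          ((A⁻¹ : Matrix.SpecialLinearGroup (Fin 2) ℂ) : Matrix (Fin 2) (Fin 2) ℂ))
        = (A : Matrix (Fin 2) (Fin 2) ℂ) * f M *
          ((A⁻¹ : Matrix.SpecialLinearGroup (Fin 2) ℂ) : Matrix (Fin 2) (Fin 2) ℂ)) :
    ∃ c : ℂ, ∀ M ∈ N, f M = c • M := by
  subst hN
  set E : Matrix (Fin 2) (Fin 2) ℂ := !![0,1;0,0] with hEdef
  have hE : E ∈ {M : Matrix (Fin 2) (Fin 2) ℂ | M ^ 2 = 0} := by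
    show E ^ 2 = 0
    rw [sq, hEdef, Matrix.mul_fin_two]
    ext i j; fin_cases i <;> fin_cases j <;> simp
  set U : Matrix.SpecialLinearGroup (Fin 2) ℂ :=
    ⟨!![1,1;0,1], by simp [Matrix.det_fin_two_of]⟩ with hUdef
  have hUinv : ((U⁻¹ : Matrix.SpecialLinearGroup (Fin 2) ℂ) : Matrix (Fin 2) (Fin 2) ℂ)
      = !![1,-1;0,1] := by
    rw [Matrix.SpecialLinearGroup.coe_inv, hUdef, Matrix.adjugate_fin_two]
    norm_num
  have hUE : (U : Matrix (Fin 2) (Fin 2) ℂ) * E *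
      ((U⁻¹ : Matrix.SpecialLinearGroup (Fin 2) ℂ) : Matrix (Fin 2) (Fin 2) ℂ) = E := by
    rw [hUinv, hUdef, hEdef]
    show !![(1:ℂ),1;0,1] * !![0,1;0,0] * !![1,-1;0,1] = !![0,1;0,0]
    rw [Matrix.mul_fin_two, Matrix.mul_fin_two]
    norm_num
  -- f E = c • E
  have hFE := hequiv U E hE
  rw [hUE, hUinv] at hFE
  set F := f E with hFdef
  have hF2 : F ^ 2 = 0 := hmaps E hE
  have hFeta : F = !![F 0 0, F 0 1; F 1 0, F 1 1] := Matrix.eta_fin_two F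
  have hFE' : F = !![(1:ℂ),1;0,1] * F * !![1,-1;0,1] := by
    nth_rewrite 1 [hFE]; rfl
  rw [hFeta] at hFE' hF2
  rw [Matrix.mul_fin_two, Matrix.mul_fin_two] at hFE'
  rw [sq, Matrix.mul_fin_two] at hF2
  have e00 := congrFun (congrFun hFE' 0) 0
  have e01 := congrFun (congrFun hFE' 0) 1
  have s00 := congrFun (congrFun hF2 0) 0
  simp at e00 e01 s00
  -- e00 : F 1 0 = 0, e01 : F 0 1 = -F 1 0 + -F 0 0 + (F 0 1 + F 1 1)
  have hps : F 0 0 = F 1 1 := by linear_combination e01 - e00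
  have hp : F 0 0 = 0 := by
    have h2 : F 0 0 * F 0 0 = 0 := by linear_combination s00 - F 0 1 * e00
    exact mul_self_eq_zero.mp h2
  set c := F 0 1 with hcdef
  have hfE : f E = c • E := by
    rw [← hFdef, hFeta, e00, hp, ← hps, hp, hEdef]
    ext i j; fin_cases i <;> fin_cases j <;> simp
  refine ⟨c, fun M hM => ?_⟩
  have hM2 : M ^ 2 = 0 := hM
  by_cases hM0 : M = 0
  · -- f 0 = 0
    subst hM0
    set L : Matrix.SpecialLinearGroup (Fin 2) ℂ :=
      ⟨!![1,0;1,1], by simp [Matrix.det_fin_two_of]⟩ with hLdef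
    have hLinv : ((L⁻¹ : Matrix.SpecialLinearGroup (Fin 2) ℂ) : Matrix (Fin 2) (Fin 2) ℂ)
        = !![1,0;-1,1] := by
      rw [Matrix.SpecialLinearGroup.coe_inv, hLdef, Matrix.adjugate_fin_two]
      norm_num
    have h0 : (0 : Matrix (Fin 2) (Fin 2) ℂ) ∈ {M : Matrix (Fin 2) (Fin 2) ℂ | M ^ 2 = 0} := by
      show (0:Matrix (Fin 2) (Fin 2) ℂ) ^ 2 = 0; simp
    have hU0 := hequiv U 0 h0
    have hL0 := hequiv L 0 h0
    simp only [Matrix.mul_zero, Matrix.zero_mul] at hU0 hL0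
    set G := f 0 with hGdef
    have hG2 : G ^ 2 = 0 := hmaps 0 h0
    have hGeta : G = !![G 0 0, G 0 1; G 1 0, G 1 1] := Matrix.eta_fin_two G
    have hGU : G = !![(1:ℂ),1;0,1] * G * !![1,-1;0,1] := by
      nth_rewrite 1 [hU0]; rw [hUinv]
    have hGL : G = !![(1:ℂ),0;1,1] * G * !![1,0;-1,1] := by
      nth_rewrite 1 [hL0]; rw [hLinv]
    rw [hGeta] at hGU hGL hG2
    rw [Matrix.mul_fin_two, Matrix.mul_fin_two] at hGU hGL
    rw [sq, Matrix.mul_fin_two] at hG2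
    have g00 := congrFun (congrFun hGU 0) 0
    have g01 := congrFun (congrFun hGU 0) 1
    have g01' := congrFun (congrFun hGL 0) 0
    have gs := congrFun (congrFun hG2 0) 0
    simp at g00 g01 g01' gs
    have hq' : G 0 1 = 0 := by linear_combination g01'
    have hp' : G 0 0 = 0 := by
      have h2 : G 0 0 * G 0 0 = 0 := by linear_combination gs - G 0 1 * g00
      exact mul_self_eq_zero.mp h2
    have h11 : G 1 1 = 0 := by linear_combination -g01 + g00 + hp'
    show G = c • 0
    rw [hGeta, g00, hq', hp', h11]
    ext i j; fin_cases i <;> fin_cases j <;> simp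
  · -- M ≠ 0
    have hMeta : M = !![M 0 0, M 0 1; M 1 0, M 1 1] := Matrix.eta_fin_two M
    set a := M 0 0; set b := M 0 1; set cc := M 1 0; set d := M 1 1
    rw [hMeta] at hM2
    rw [sq, Matrix.mul_fin_two] at hM2
    have m00 := congrFun (congrFun hM2 0) 0
    have m01 := congrFun (congrFun hM2 0) 1
    have m10 := congrFun (congrFun hM2 1) 0
    have m11 := congrFun (congrFun hM2 1) 1
    simp at m00 m01 m10 m11
    have htr : d = -a := by
      by_cases h : a + d = 0
      · linear_combination h
      · exfalso
        have hb : b = 0 := by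
          rcases mul_eq_zero.mp (show b * (a + d) = 0 by linear_combination m01) with h' | h'
          · exact h'
          · exact absurd h' h
        have hc : cc = 0 := by
          rcases mul_eq_zero.mp (show cc * (a + d) = 0 by linear_combination m10) with h' | h'
          · exact h'
          · exact absurd h' h
        have ha : a = 0 := mul_self_eq_zero.mp (by linear_combination m00 - cc * hb)
        have hd : d = 0 := mul_self_eq_zero.mp (by linear_combination m11 - b * hc)
        exact h (by rw [ha, hd, add_zero])
    by_cases hb : b = 0
    · -- M = !![0,0;cc,0], cc ≠ 0
      have ha : a = 0 := mul_self_eq_zero.mp (by linear_combination m00 - cc * hb)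
      have hd : d = 0 := by rw [htr, ha, neg_zero]
      have hcc : cc ≠ 0 := by
        intro h
        exact hM0 (by rw [hMeta, ha, hb, h, hd]; ext i j; fin_cases i <;> fin_cases j <;> simp)
      obtain ⟨s, hs⟩ := IsAlgClosed.exists_pow_nat_eq (-cc⁻¹) (n := 2) (by norm_num)
      have hs' : s ^ 2 * cc = -1 := by
        rw [hs]; field_simp
      set A : Matrix (Fin 2) (Fin 2) ℂ := !![0, s; s*cc, 0] with hAdef
      have hdet : A.det = 1 := by
        rw [hAdef, Matrix.det_fin_two_of]; linear_combination -hs'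
      set Asl : Matrix.SpecialLinearGroup (Fin 2) ℂ := ⟨A, hdet⟩ with hAsldef
      have hAinv : ((Asl⁻¹ : Matrix.SpecialLinearGroup (Fin 2) ℂ) : Matrix (Fin 2) (Fin 2) ℂ)
          = !![0, -s; -(s*cc), 0] := by
        rw [Matrix.SpecialLinearGroup.coe_inv, hAsldef]
        show A.adjugate = _
        rw [hAdef, Matrix.adjugate_fin_two]
        norm_num
      have hM' : (Asl : Matrix (Fin 2) (Fin 2) ℂ) * E *
          ((Asl⁻¹ : Matrix.SpecialLinearGroup (Fin 2) ℂ) : Matrix (Fin 2) (Fin 2) ℂ) = M := by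
        rw [hAinv]
        show A * E * _ = M
        rw [hAdef, hEdef, hMeta, ha, hb, hd, Matrix.mul_fin_two, Matrix.mul_fin_two]
        ext i j; fin_cases i <;> fin_cases j <;> simp
        linear_combination (-cc) * hs'
      calc f M = f ((Asl : Matrix (Fin 2) (Fin 2) ℂ) * E *
            ((Asl⁻¹ : Matrix.SpecialLinearGroup (Fin 2) ℂ) : Matrix (Fin 2) (Fin 2) ℂ)) := by
            rw [hM']
        _ = (Asl : Matrix (Fin 2) (Fin 2) ℂ) * f E *
            ((Asl⁻¹ : Matrix.SpecialLinearGroup (Fin 2) ℂ) : Matrix (Fin 2) (Fin 2) ℂ) :=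
            hequiv Asl E hE
        _ = c • ((Asl : Matrix (Fin 2) (Fin 2) ℂ) * E *
            ((Asl⁻¹ : Matrix.SpecialLinearGroup (Fin 2) ℂ) : Matrix (Fin 2) (Fin 2) ℂ)) := by
            rw [hfE, Matrix.mul_smul, Matrix.smul_mul]
        _ = c • M := by rw [hM']
    · -- b ≠ 0
      obtain ⟨s, hs⟩ := IsAlgClosed.exists_pow_nat_eq (b⁻¹) (n := 2) (by norm_num)
      have hs' : s ^ 2 * b = 1 := by
        rw [hs]; field_simp
      set A : Matrix (Fin 2) (Fin 2) ℂ := !![s*b, 0; -(s*a), s] with hAdef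
      have hdet : A.det = 1 := by
        rw [hAdef, Matrix.det_fin_two_of]; linear_combination hs'
      set Asl : Matrix.SpecialLinearGroup (Fin 2) ℂ := ⟨A, hdet⟩ with hAsldef
      have hAinv : ((Asl⁻¹ : Matrix.SpecialLinearGroup (Fin 2) ℂ) : Matrix (Fin 2) (Fin 2) ℂ)
          = !![s, 0; s*a, s*b] := by
        rw [Matrix.SpecialLinearGroup.coe_inv, hAsldef]
        show A.adjugate = _
        rw [hAdef, Matrix.adjugate_fin_two]
        norm_num
      have hM' : (Asl : Matrix (Fin 2) (Fin 2) ℂ) * E *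
          ((Asl⁻¹ : Matrix.SpecialLinearGroup (Fin 2) ℂ) : Matrix (Fin 2) (Fin 2) ℂ) = M := by
        rw [hAinv]
        show A * E * _ = M
        rw [hAdef, hEdef, hMeta, htr, Matrix.mul_fin_two, Matrix.mul_fin_two]
        ext i j; fin_cases i <;> fin_cases j <;> simp
        · linear_combination a * hs'
        · linear_combination b * hs'
        · linear_combination (-s^2) * m00 + cc * hs'
        · linear_combination a * hs'
      calc f M = f ((Asl : Matrix (Fin 2) (Fin 2) ℂ) * E *
            ((Asl⁻¹ : Matrix.SpecialLinearGroup (Fin 2) ℂ) : Matrix (Fin 2) (Fin 2) ℂ)) := by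
            rw [hM']
        _ = (Asl : Matrix (Fin 2) (Fin 2) ℂ) * f E *
            ((Asl⁻¹ : Matrix.SpecialLinearGroup (Fin 2) ℂ) : Matrix (Fin 2) (Fin 2) ℂ) :=
            hequiv Asl E hE
        _ = c • ((Asl : Matrix (Fin 2) (Fin 2) ℂ) * E *
            ((Asl⁻¹ : Matrix.SpecialLinearGroup (Fin 2) ℂ) : Matrix (Fin 2) (Fin 2) ℂ)) := by
            rw [hfE, Matrix.mul_smul, Matrix.smul_mul]
        _ = c • M := by rw [hM']
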